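/- The Neumann/Robin matrix A_{n,3} admits the ten-term decomposition A_{n,3} = ((-4+(a_0-a_1)h)/2)·I^{⊗n} + (1/2)·(I^{⊗(n-1)} ⊗ X) - (1/2)·X^{⊗n} + ((a_0+a_1)h/2)·(I^{⊗(n-1)} ⊗ Z) + S_n + S_n^† - (1/2)·C_n^- + ((a_0-a_1)h/2)·X^{⊗n}·C_n^- + ((a_0+a_1)h/2)·X^{⊗n}·C_n^-·(I^{⊗(n-1)} ⊗ Z) + (1/2)·X^{⊗n}·C_n^-·(I^{⊗(n-1)} ⊗ X), where every term is a unitary matrix scaled by a real coefficient. -/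
import Mathlib


open Matrix

/-- The Neumann/Robin matrix `A_{n,3}`: the tridiagonal Dirichlet Laplacian
(diagonal `-2`, off-diagonals `1`) modified so that entry `(0,0)` is `-2+2a₀h`,
entry `(0,1)` is `2`, entry `(2^n-1, 2^n-2)` is `2`, and entry `(2^n-1, 2^n-1)`
is `-2-2a₁h`. -/
def A3 (n : ℕ) (a0 a1 h : ℝ) : Matrix (Fin (2^n)) (Fin (2^n)) ℝ :=
  Matrix.of fun i j =>
    if (i : ℕ) = 0 ∧ (j : ℕ) = 0 then -2 + 2*a0*h
    else if (i : ℕ) = 0 ∧ (j : ℕ) = 1 then 2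
    else if (i : ℕ) = 2^n - 1 ∧ (j : ℕ) = 2^n - 2 then 2
    else if (i : ℕ) = 2^n - 1 ∧ (j : ℕ) = 2^n - 1 then -2 - 2*a1*h
    else if (i : ℕ) = (j : ℕ) then -2
    else if (i : ℕ) + 1 = (j : ℕ) ∨ (j : ℕ) + 1 = (i : ℕ) then 1 else 0

/-- The cyclic increment matrix. -/
def Sn (n : ℕ) : Matrix (Fin (2^n)) (Fin (2^n)) ℝ :=
  Matrix.of fun i j => if (i : ℕ) = ((j : ℕ) + 1) % 2^n then 1 else 0

/-- `X^{⊗n}`: the exchange matrix of size `2^n`. -/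
def Xpow (n : ℕ) : Matrix (Fin (2^n)) (Fin (2^n)) ℝ :=
  Matrix.of fun i j => if (i : ℕ) + (j : ℕ) = 2^n - 1 then 1 else 0

/-- The signed exchange matrix `C_n^-`. -/
def Cnm (n : ℕ) : Matrix (Fin (2^n)) (Fin (2^n)) ℝ :=
  Matrix.of fun i j =>
    if ((i : ℕ) = 0 ∧ (j : ℕ) = 2^n - 1) ∨ ((i : ℕ) = 2^n - 1 ∧ (j : ℕ) = 0) then 1
    else if (i : ℕ) + (j : ℕ) = 2^n - 1 then -1 else 0

/-- `I^{⊗(n-1)} ⊗ Z`: diagonal, j-th entry `1` if `j` even, `-1` if `j` odd. -/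
def IZ (n : ℕ) : Matrix (Fin (2^n)) (Fin (2^n)) ℝ :=
  Matrix.of fun i j => if i = j then (if (i : ℕ) % 2 = 0 then 1 else -1) else 0

/-- `I^{⊗(n-1)} ⊗ X`: the permutation matrix flipping the last bit. -/
def IX (n : ℕ) : Matrix (Fin (2^n)) (Fin (2^n)) ℝ :=
  Matrix.of fun i j => if (i : ℕ) / 2 = (j : ℕ) / 2 ∧ (i : ℕ) ≠ (j : ℕ) then 1 else 0


set_option maxHeartbeats 1000000

lemma entry_key (N : ℕ) (hdvd : 4 ∣ N) (a0 a1 h : ℝ) (i j : ℕ) (hi : i < N) (hj : j < N) :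
  (if i = 0 ∧ j = 0 then -2 + 2*a0*h
   else if i = 0 ∧ j = 1 then 2
   else if i = N - 1 ∧ j = N - 2 then 2
   else if i = N - 1 ∧ j = N - 1 then -2 - 2*a1*h
   else if i = j then -2
   else if i + 1 = j ∨ j + 1 = i then 1 else (0:ℝ))
  =
  ((-4 + (a0 - a1)*h)/2) * (if i = j then 1 else 0)
  + (1/2) * (if i/2 = j/2 ∧ i ≠ j then 1 else 0)
  - (1/2) * (if i + j = N - 1 then 1 else 0)
  + ((a0+a1)*h/2) * (if i = j then (if i % 2 = 0 then 1 else -1) else 0)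
  + (if i = (j+1) % N then 1 else 0)
  + (if j = (i+1) % N then 1 else 0)
  - (1/2) * (if (i = 0 ∧ j = N-1) ∨ (i = N-1 ∧ j = 0) then 1 else if i + j = N-1 then -1 else 0)
  + ((a0-a1)*h/2) * (if i = j then (if i = 0 ∨ i = N-1 then 1 else -1) else 0)
  + ((a0+a1)*h/2) * (if i = j then (if i = 0 ∨ i = N-1 then 1 else -1) * (if i % 2 = 0 then 1 else -1) else 0)
  + (1/2) * (if i/2 = j/2 ∧ i ≠ j then (if i = 0 ∨ i = N-1 then 1 else -1) else 0) := by
  have hm : ∀ m : ℕ, m < N → (m+1) % N = if m+1 = N then 0 else m+1 := by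
    intro m hm; split_ifs with hc
    · rw [hc, Nat.mod_self]
    · exact Nat.mod_eq_of_lt (by omega)
  rw [hm i hi, hm j hj]
  by_cases h1 : i = j
  · subst h1
    simp only [and_self, eq_self_iff_true, if_true,
      if_neg (show ¬(i = 0 ∧ i = 1) by omega),
      if_neg (show ¬(i = N - 1 ∧ i = N - 2) by omega),
      if_neg (show ¬(i/2 = i/2 ∧ i ≠ i) by omega),
      if_neg (show ¬(i + i = N - 1) by omega),
      if_neg (show ¬(i = if i + 1 = N then 0 else i + 1) by split_ifs <;> omega),
      if_neg (show ¬((i = 0 ∧ i = N-1) ∨ (i = N-1 ∧ i = 0)) by omega)]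
    try simp only [false_or, or_false, true_or, or_true, false_and, and_false, true_and, and_true,
      if_true, if_false, not_false_iff, not_true]
    split_ifs
    all_goals first | (exfalso; omega) | ring | skip
    all_goals exfalso
    all_goals try simp only [false_or, or_false, true_or, or_true, false_and, and_false, not_true, not_false_iff] at *
    all_goals omega
  · by_cases h2 : i + 1 = j
    · subst h2
      simp only [
        if_neg (show ¬(i = 0 ∧ i + 1 = 0) by omega),
        if_neg (show ¬(i = N - 1 ∧ i + 1 = N - 2) by omega),
        if_neg (show ¬(i = N - 1 ∧ i + 1 = N - 1) by omega),
        if_neg (show ¬(i = i + 1) by omega),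
        if_pos (show i + 1 = i + 1 ∨ i + 1 + 1 = i by omega),
        if_neg (show ¬(i = if (i+1) + 1 = N then 0 else (i+1) + 1) by split_ifs <;> omega),
        if_pos (show i + 1 = (if i + 1 = N then 0 else i + 1) by rw [if_neg (show ¬(i+1=N) by omega)]),
        if_neg (show ¬((i = 0 ∧ i + 1 = N-1) ∨ (i = N-1 ∧ i + 1 = 0)) by omega)]
      try simp only [false_or, or_false, true_or, or_true, false_and, and_false, true_and, and_true,
        if_true, if_false, not_false_iff, not_true]
      split_ifs
      all_goals first | (exfalso; omega) | ring | skip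
      all_goals exfalso
      all_goals try simp only [false_or, or_false, true_or, or_true, false_and, and_false, not_true, not_false_iff] at *
      all_goals omega
    · by_cases h3 : j + 1 = i
      · subst h3
        simp only [
          if_neg (show ¬(j + 1 = 0 ∧ j = 0) by omega),
          if_neg (show ¬(j + 1 = 0 ∧ j = 1) by omega),
          if_neg (show ¬(j + 1 = N - 1 ∧ j = N - 1) by omega),
          if_neg (show ¬(j + 1 = j) by omega),
          if_pos (show j + 1 + 1 = j ∨ j + 1 = j + 1 by omega),
          if_pos (show j + 1 = (if j + 1 = N then 0 else j + 1) by rw [if_neg (show ¬(j+1=N) by omega)]),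
          if_neg (show ¬(j = if (j+1) + 1 = N then 0 else (j+1) + 1) by split_ifs <;> omega),
          if_neg (show ¬((j + 1 = 0 ∧ j = N-1) ∨ (j + 1 = N-1 ∧ j = 0)) by omega)]
        try simp only [false_or, or_false, true_or, or_true, false_and, and_false, true_and, and_true,
          if_true, if_false, not_false_iff, not_true]
        split_ifs
        all_goals first | (exfalso; omega) | ring | skip
        all_goals exfalso
        all_goals try simp only [false_or, or_false, true_or, or_true, false_and, and_false, not_true, not_false_iff] at *
        all_goals omega
      · simp only [if_neg h1,
          if_neg (show ¬(i = 0 ∧ j = 0) by omega),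
          if_neg (show ¬(i = 0 ∧ j = 1) by omega),
          if_neg (show ¬(i = N - 1 ∧ j = N - 2) by omega),
          if_neg (show ¬(i = N - 1 ∧ j = N - 1) by omega),
          if_neg (show ¬(i + 1 = j ∨ j + 1 = i) by omega),
          if_neg (show ¬(i/2 = j/2 ∧ i ≠ j) by omega)]
        try simp only [false_or, or_false, true_or, or_true, false_and, and_false, true_and, and_true,
          if_true, if_false, not_false_iff, not_true]
        split_ifs
        all_goals first | (exfalso; omega) | ring | skip
        all_goals exfalso
        all_goals try simp only [false_or, or_false, true_or, or_true, false_and, and_false, not_true, not_false_iff] at *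
        all_goals omega

lemma XC_apply (n : ℕ) (i j : Fin (2^n)) :
    (Xpow n * Cnm n) i j =
      if (i:ℕ) = (j:ℕ) then (if (i:ℕ) = 0 ∨ (i:ℕ) = 2^n - 1 then 1 else -1) else 0 := by
  have hi := i.isLt
  have hj := j.isLt
  have hpos : 0 < 2^n := pow_pos (by norm_num) n
  rw [Matrix.mul_apply, Finset.sum_eq_single (⟨2^n - 1 - (i:ℕ), by omega⟩ : Fin (2^n))]
  · simp only [Xpow, Cnm, Matrix.of_apply]
    split_ifs
    all_goals first | (exfalso; omega) | norm_num
  · intro k _ hk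
    have hne : ¬((i:ℕ) + (k:ℕ) = 2^n - 1) := by
      intro hc
      exact hk (Fin.ext (by simp; omega))
    simp only [Xpow, Matrix.of_apply, if_neg hne, zero_mul]
  · intro hc; exact absurd (Finset.mem_univ _) hc

lemma XCZ_apply (n : ℕ) (i j : Fin (2^n)) :
    (Xpow n * Cnm n * IZ n) i j =
      if (i:ℕ) = (j:ℕ) then
        (if (i:ℕ) = 0 ∨ (i:ℕ) = 2^n - 1 then 1 else -1) * (if (i:ℕ) % 2 = 0 then 1 else -1)
      else 0 := by
  rw [Matrix.mul_apply, Finset.sum_eq_single i]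
  · rw [XC_apply]
    simp only [IZ, Matrix.of_apply, if_pos rfl]
    by_cases hij : i = j
    · subst hij; simp
    · rw [if_neg hij, if_neg (show ¬((i:ℕ) = (j:ℕ)) from fun hc => hij (Fin.ext hc)), mul_zero]
  · intro k _ hk
    rw [XC_apply, if_neg (show ¬((i:ℕ) = (k:ℕ)) from fun hc => hk (Fin.ext hc).symm), zero_mul]
  · intro hc; exact absurd (Finset.mem_univ _) hc

lemma XCX_apply (n : ℕ) (i j : Fin (2^n)) :
    (Xpow n * Cnm n * IX n) i j =
      if (i:ℕ)/2 = (j:ℕ)/2 ∧ (i:ℕ) ≠ (j:ℕ) then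
        (if (i:ℕ) = 0 ∨ (i:ℕ) = 2^n - 1 then 1 else -1)
      else 0 := by
  rw [Matrix.mul_apply, Finset.sum_eq_single i]
  · rw [XC_apply]
    simp only [IX, Matrix.of_apply, if_pos rfl]
    split_ifs <;> ring
  · intro k _ hk
    rw [XC_apply, if_neg (show ¬((i:ℕ) = (k:ℕ)) from fun hc => hk (Fin.ext hc).symm), zero_mul]
  · intro hc; exact absurd (Finset.mem_univ _) hc

lemma perm_unitary {N : ℕ} (M : Matrix (Fin N) (Fin N) ℝ) (σ : Fin N → Fin N)
    (hσ : Function.Injective σ) (ε : Fin N → ℝ) (hε : ∀ i, ε i * ε i = 1)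
    (hM : ∀ i j, M i j = if j = σ i then ε i else 0) : M * Mᵀ = 1 := by
  ext i j
  rw [Matrix.mul_apply]
  simp only [Matrix.transpose_apply, hM]
  rw [Finset.sum_eq_single (σ i)]
  · by_cases hij : i = j
    · subst hij; simp [Matrix.one_apply, hε i]
    · rw [if_pos rfl, if_neg (show ¬(σ i = σ j) from fun hc => hij (hσ hc)), mul_zero,
        Matrix.one_apply_ne hij]
  · intro k _ hk; rw [if_neg hk, zero_mul]
  · intro hc; exact absurd (Finset.mem_univ _) hc

theorem stmt_13 (n : ℕ) (hn : 2 ≤ n) (a0 a1 h : ℝ) :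
    (A3 n a0 a1 h =
      ((-4 + (a0 - a1)*h)/2) • (1 : Matrix (Fin (2^n)) (Fin (2^n)) ℝ)
        + (1/2 : ℝ) • IX n
        - (1/2 : ℝ) • Xpow n
        + ((a0 + a1)*h/2) • IZ n
        + Sn n + (Sn n)ᵀ
        - (1/2 : ℝ) • Cnm n
        + ((a0 - a1)*h/2) • (Xpow n * Cnm n)
        + ((a0 + a1)*h/2) • (Xpow n * Cnm n * IZ n)
        + (1/2 : ℝ) • (Xpow n * Cnm n * IX n)) ∧
    ∀ M ∈ ([1, IX n, Xpow n, IZ n, Sn n, (Sn n)ᵀ, Cnm n,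
        Xpow n * Cnm n, Xpow n * Cnm n * IZ n, Xpow n * Cnm n * IX n] :
        List (Matrix (Fin (2^n)) (Fin (2^n)) ℝ)),
      M * Mᵀ = 1 := by
  have hpos : 0 < 2^n := pow_pos (by norm_num) n
  have hdvd : (4:ℕ) ∣ 2^n := by
    have h22 : (2:ℕ)^2 ∣ 2^n := pow_dvd_pow 2 hn
    simpa using h22
  constructor
  · ext i j
    have hi := i.isLt
    have hj := j.isLt
    simp only [Matrix.add_apply, Matrix.sub_apply, Matrix.smul_apply,
      Matrix.transpose_apply, Matrix.one_apply, smul_eq_mul,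
      XCZ_apply, XCX_apply, XC_apply]
    simp only [A3, Sn, Xpow, Cnm, IZ, IX, Matrix.of_apply, Fin.ext_iff]
    exact entry_key (2^n) hdvd a0 a1 h i j hi hj
  · intro M hM
    have hm2 : ∀ m : ℕ, m < 2^n → (m+1) % 2^n = if m+1 = 2^n then 0 else m+1 := by
      intro m hmlt; split_ifs with hc
      · rw [hc, Nat.mod_self]
      · exact Nat.mod_eq_of_lt (by omega)
    simp only [List.mem_cons, List.not_mem_nil, or_false] at hM
    rcases hM with rfl | rfl | rfl | rfl | rfl | rfl | rfl | rfl | rfl | rfl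
    · rw [Matrix.transpose_one, Matrix.mul_one]
    · -- IX
      exact perm_unitary (IX n)
        (fun i => ⟨if (i:ℕ) % 2 = 0 then (i:ℕ)+1 else (i:ℕ)-1,
          by have h2 := i.isLt; split_ifs <;> omega⟩)
        (by intro a b hab
            have ha := a.isLt; have hb := b.isLt
            simp only [Fin.mk.injEq] at hab
            apply Fin.ext
            split_ifs at hab <;> omega)
        (fun _ => 1) (fun _ => by norm_num)
        (by intro i j
            have hi := i.isLt; have hj := j.isLt
            simp only [IX, Matrix.of_apply, Fin.ext_iff]
            split_ifs
            all_goals first | rfl | (exfalso; omega))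
    · -- Xpow
      exact perm_unitary (Xpow n)
        (fun i => ⟨2^n - 1 - (i:ℕ), by have h2 := i.isLt; omega⟩)
        (by intro a b hab
            have ha := a.isLt; have hb := b.isLt
            simp only [Fin.mk.injEq] at hab
            apply Fin.ext
            omega)
        (fun _ => 1) (fun _ => by norm_num)
        (by intro i j
            have hi := i.isLt; have hj := j.isLt
            simp only [Xpow, Matrix.of_apply, Fin.ext_iff]
            split_ifs
            all_goals first | rfl | (exfalso; omega))
    · -- IZ
      exact perm_unitary (IZ n) (fun i => i) (fun a b hab => hab)
        (fun i => if (i:ℕ) % 2 = 0 then 1 else -1)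
        (fun i => by beta_reduce; split_ifs <;> norm_num)
        (by intro i j
            simp only [IZ, Matrix.of_apply]
            by_cases hij : i = j
            · subst hij; simp
            · rw [if_neg hij, if_neg (show ¬ j = i from fun hc => hij hc.symm)])
    · -- Sn
      exact perm_unitary (Sn n)
        (fun i => ⟨if (i:ℕ) = 0 then 2^n - 1 else (i:ℕ) - 1,
          by have h2 := i.isLt; split_ifs <;> omega⟩)
        (by intro a b hab
            have ha := a.isLt; have hb := b.isLt
            simp only [Fin.mk.injEq] at hab
            apply Fin.ext
            split_ifs at hab <;> omega)
        (fun _ => 1) (fun _ => by norm_num)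
        (by intro i j
            have hi := i.isLt; have hj := j.isLt
            simp only [Sn, Matrix.of_apply, Fin.ext_iff]
            rw [hm2 (j:ℕ) hj]
            split_ifs
            all_goals first | rfl | (exfalso; omega))
    · -- Snᵀ
      exact perm_unitary (Sn n)ᵀ
        (fun i => ⟨if (i:ℕ) + 1 = 2^n then 0 else (i:ℕ) + 1,
          by have h2 := i.isLt; split_ifs <;> omega⟩)
        (by intro a b hab
            have ha := a.isLt; have hb := b.isLt
            simp only [Fin.mk.injEq] at hab
            apply Fin.ext
            split_ifs at hab <;> omega)
        (fun _ => 1) (fun _ => by norm_num)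
        (by intro i j
            have hi := i.isLt; have hj := j.isLt
            simp only [Matrix.transpose_apply, Sn, Matrix.of_apply, Fin.ext_iff]
            rw [hm2 (i:ℕ) hi]
            try split_ifs
            all_goals first | rfl | (exfalso; omega))
    · -- Cnm
      exact perm_unitary (Cnm n)
        (fun i => ⟨2^n - 1 - (i:ℕ), by have h2 := i.isLt; omega⟩)
        (by intro a b hab
            have ha := a.isLt; have hb := b.isLt
            simp only [Fin.mk.injEq] at hab
            apply Fin.ext
            omega)
        (fun i => if (i:ℕ) = 0 ∨ (i:ℕ) = 2^n - 1 then 1 else -1)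
        (fun i => by beta_reduce; split_ifs <;> norm_num)
        (by intro i j
            have hi := i.isLt; have hj := j.isLt
            simp only [Cnm, Matrix.of_apply, Fin.ext_iff]
            split_ifs
            all_goals first | rfl | (exfalso; omega))
    · -- Xpow * Cnm
      exact perm_unitary (Xpow n * Cnm n) (fun i => i) (fun a b hab => hab)
        (fun i => if (i:ℕ) = 0 ∨ (i:ℕ) = 2^n - 1 then 1 else -1)
        (fun i => by beta_reduce; split_ifs <;> norm_num)
        (by intro i j
            rw [XC_apply]
            by_cases hij : i = j
            · subst hij; simp
            · rw [if_neg (show ¬ (i:ℕ) = (j:ℕ) from fun hc => hij (Fin.ext hc)),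
                if_neg (show ¬ j = i from fun hc => hij hc.symm)])
    · -- Xpow * Cnm * IZ
      exact perm_unitary (Xpow n * Cnm n * IZ n) (fun i => i) (fun a b hab => hab)
        (fun i => (if (i:ℕ) = 0 ∨ (i:ℕ) = 2^n - 1 then 1 else -1) *
          (if (i:ℕ) % 2 = 0 then 1 else -1))
        (fun i => by beta_reduce; split_ifs <;> norm_num)
        (by intro i j
            rw [XCZ_apply]
            by_cases hij : i = j
            · subst hij; simp
            · rw [if_neg (show ¬ (i:ℕ) = (j:ℕ) from fun hc => hij (Fin.ext hc)),
                if_neg (show ¬ j = i from fun hc => hij hc.symm)])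
    · -- Xpow * Cnm * IX
      exact perm_unitary (Xpow n * Cnm n * IX n)
        (fun i => ⟨if (i:ℕ) % 2 = 0 then (i:ℕ)+1 else (i:ℕ)-1,
          by have h2 := i.isLt; split_ifs <;> omega⟩)
        (by intro a b hab
            have ha := a.isLt; have hb := b.isLt
            simp only [Fin.mk.injEq] at hab
            apply Fin.ext
            split_ifs at hab <;> omega)
        (fun i => if (i:ℕ) = 0 ∨ (i:ℕ) = 2^n - 1 then 1 else -1)
        (fun i => by beta_reduce; split_ifs <;> norm_num)
        (by intro i j
            have hi := i.isLt; have hj := j.isLt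
            rw [XCX_apply]
            simp only [Fin.ext_iff]
            split_ifs
            all_goals first | rfl | (exfalso; omega))
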